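/- Let G be a group, A a ring with a G-action, and X a G-set. Then the linear map M_G(M_X(A)) → M_{|X|}(M_G(A)) determined by ε_{s,t} ⊗ ε_{x,y} ⊗ a ↦ ε_{s⁻¹x, t⁻¹y} ⊗ ε_{s,t} ⊗ a is a G-equivariant ring isomorphism, natural in X and A, where G acts on M_G(M_X A) by (g·f)(s,t) = g·f(g⁻¹s, g⁻¹t) (with the action on M_X A given by acting on X and on A) and on M_{|X|}(M_G A) via the action on M_G A only (trivial action on the index set |X|). -/

import Mathlib

/-- Let `G` be a group, `A` a ring with `G`-action `α`, and `X` a `G`-set.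
The linear map determined by `ε_{s,t} ⊗ ε_{x,y} ⊗ a ↦ ε_{s⁻¹x,t⁻¹y} ⊗ ε_{s,t} ⊗ a`
is a `G`-equivariant ring isomorphism `M_G(M_X(A)) ≅ M_{|X|}(M_G(A))`, natural in `X`
and `A`; here `G` acts on `M_G(M_X A)` by `(g·f)(s,t) = g·f(g⁻¹s, g⁻¹t)` (acting on
`M_X A` through `X` and `A`) and on `M_{|X|}(M_G A)` through `M_G A` only (trivially on
the index set `|X|`).  The matrix rings are presented by additive isomorphisms `jP`,
`jQ` from the groups of finitely supported matrices subject to the matrix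
multiplication rules, and the actions by homomorphisms `αP`, `αQ` into the ring
automorphisms subject to the rules just stated. -/
lemma stmt12.coeAE {M N : Type} [AddCommMonoid M] [AddCommMonoid N] (e : M ≃ₗ[ℕ] N) (x : M) :
    e.toAddEquiv x = e x := rfl

section aux
variable {G X A : Type} [Group G] [MulAction G X] [AddCommMonoid A]

def stmtσ : ((G × G) × (X × X)) ≃ ((X × X) × (G × G)) where
  toFun z := ((z.1.1⁻¹ • z.2.1, z.1.2⁻¹ • z.2.2), z.1)
  invFun w := (w.2, (w.2.1 • w.1.1, w.2.2 • w.1.2))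
  left_inv z := by simp
  right_inv w := by simp

noncomputable def stmtE0 : ((G × G) →₀ ((X × X) →₀ A)) ≃+ ((X × X) →₀ ((G × G) →₀ A)) :=
  ((Finsupp.curryLinearEquiv ℕ (α := G × G) (β := X × X) (M := A)).symm.toAddEquiv.trans (Finsupp.domCongr stmtσ)).trans
    (Finsupp.curryLinearEquiv ℕ (α := X × X) (β := G × G) (M := A)).toAddEquiv

lemma stmtE0_apply (f : (G × G) →₀ ((X × X) →₀ A)) (u : X × X) (v : G × G) :
    stmtE0 f u v = f v (v.1 • u.1, v.2 • u.2) := by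
  rw [stmtE0, AddEquiv.trans_apply, AddEquiv.trans_apply, stmt12.coeAE,
    Finsupp.curryLinearEquiv_apply, Finsupp.curry_apply, Finsupp.domCongr_apply, Finsupp.equivMapDomain_apply,
    stmt12.coeAE, Finsupp.curryLinearEquiv_symm_apply]
  rfl

lemma stmtE0_single [DecidableEq G] [DecidableEq X] (p : G × G) (x : X × X) (a : A) :
    stmtE0 (Finsupp.single p (Finsupp.single x a)) =
      Finsupp.single (p.1⁻¹ • x.1, p.2⁻¹ • x.2) (Finsupp.single p a) := by
  ext u v
  rw [stmtE0_apply]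
  by_cases h1 : p = v
  · subst h1
    simp [Finsupp.single_apply, Prod.ext_iff, inv_smul_eq_iff,
      apply_ite (fun m : (G × G) →₀ A => m p)]
  · simp [Finsupp.single_apply, Prod.ext_iff, h1,
      apply_ite (fun m : (G × G) →₀ A => m v),
      apply_ite (fun m : (X × X) →₀ A => m (v.1 • u.1, v.2 • u.2))]

end aux

theorem stmt_12 {G A X : Type} [Group G] [DecidableEq G] [Ring A] [MulAction G X] [DecidableEq X]
    (α : G →* RingAut A)
    {P Q : Type} [NonUnitalRing P] [NonUnitalRing Q]
    (jP : ((G × G) →₀ ((X × X) →₀ A)) ≃+ P)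
    (hjP : ∀ (p q : G × G) (x y : X × X) (a b : A),
      jP (Finsupp.single p (Finsupp.single x a)) *
          jP (Finsupp.single q (Finsupp.single y b)) =
        if p.2 = q.1 ∧ x.2 = y.1
        then jP (Finsupp.single (p.1, q.2) (Finsupp.single (x.1, y.2) (a * b))) else 0)
    (jQ : ((X × X) →₀ ((G × G) →₀ A)) ≃+ Q)
    (hjQ : ∀ (x y : X × X) (p q : G × G) (a b : A),
      jQ (Finsupp.single x (Finsupp.single p a)) *
          jQ (Finsupp.single y (Finsupp.single q b)) =
        if x.2 = y.1 ∧ p.2 = q.1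
        then jQ (Finsupp.single (x.1, y.2) (Finsupp.single (p.1, q.2) (a * b))) else 0)
    (αP : G →* RingAut P)
    (hαP : ∀ (g : G) (p : G × G) (x : X × X) (a : A),
      αP g (jP (Finsupp.single p (Finsupp.single x a))) =
        jP (Finsupp.single (g * p.1, g * p.2)
          (Finsupp.single (g • x.1, g • x.2) (α g a))))
    (αQ : G →* RingAut Q)
    (hαQ : ∀ (g : G) (x : X × X) (p : G × G) (a : A),
      αQ g (jQ (Finsupp.single x (Finsupp.single p a))) =
        jQ (Finsupp.single x (Finsupp.single (g * p.1, g * p.2) (α g a)))) :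
    ∃ e : P ≃+* Q,
      -- the defining formula
      (∀ (st : G × G) (xy : X × X) (a : A),
        e (jP (Finsupp.single st (Finsupp.single xy a))) =
          jQ (Finsupp.single (st.1⁻¹ • xy.1, st.2⁻¹ • xy.2) (Finsupp.single st a))) ∧
      -- `G`-equivariance
      (∀ (g : G) (p : P), e (αP g p) = αQ g (e p)) ∧
      -- naturality in `X` and `A`
      (∀ (X' A' : Type) [MulAction G X'] [Ring A']
        (f : X → X') (_ : ∀ (g : G) (x : X), f (g • x) = g • f x)
        (α' : G →* RingAut A') (φ : A →+* A') (_ : ∀ (g : G) (a : A), φ (α g a) = α' g (φ a))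
        (P' Q' : Type) [NonUnitalRing P'] [NonUnitalRing Q']
        (jP' : ((G × G) →₀ ((X' × X') →₀ A')) ≃+ P')
        (jQ' : ((X' × X') →₀ ((G × G) →₀ A')) ≃+ Q')
        (e' : P' ≃+* Q')
        (_ : ∀ (st : G × G) (xy : X' × X') (a : A'),
          e' (jP' (Finsupp.single st (Finsupp.single xy a))) =
            jQ' (Finsupp.single (st.1⁻¹ • xy.1, st.2⁻¹ • xy.2) (Finsupp.single st a)))
        (F : P →+ P')
        (_ : ∀ (st : G × G) (xy : X × X) (a : A),
          F (jP (Finsupp.single st (Finsupp.single xy a))) =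
            jP' (Finsupp.single st (Finsupp.single (f xy.1, f xy.2) (φ a))))
        (Gm : Q →+ Q')
        (_ : ∀ (xy : X × X) (st : G × G) (a : A),
          Gm (jQ (Finsupp.single xy (Finsupp.single st a))) =
            jQ' (Finsupp.single (f xy.1, f xy.2) (Finsupp.single st (φ a)))),
        ∀ p : P, e' (F p) = Gm (e p)) := by
  classical
  set eAdd : P ≃+ Q := (jP.symm.trans stmtE0).trans jQ with heAdd
  have hs : ∀ (st : G × G) (xy : X × X) (a : A),
      eAdd (jP (Finsupp.single st (Finsupp.single xy a))) =
        jQ (Finsupp.single (st.1⁻¹ • xy.1, st.2⁻¹ • xy.2) (Finsupp.single st a)) := by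
    intro st xy a
    rw [heAdd, AddEquiv.trans_apply, AddEquiv.trans_apply, AddEquiv.symm_apply_apply,
      stmtE0_single]
  have hmul : ∀ p q : P, eAdd (p * q) = eAdd p * eAdd q := by
    intro p q
    obtain ⟨m, rfl⟩ : ∃ m, p = jP m := ⟨jP.symm p, (jP.apply_symm_apply p).symm⟩
    obtain ⟨n, rfl⟩ : ∃ n, q = jP n := ⟨jP.symm q, (jP.apply_symm_apply q).symm⟩
    induction m using Finsupp.induction_linear with
    | zero => simp
    | add f g hf hg => simp only [map_add, add_mul, hf, hg]
    | single st mm =>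
      induction mm using Finsupp.induction_linear with
      | zero => simp
      | add f g hf hg => simp only [Finsupp.single_add, map_add, add_mul, hf, hg]
      | single xy a =>
        induction n using Finsupp.induction_linear with
        | zero => simp
        | add f g hf hg => simp only [map_add, mul_add, hf, hg]
        | single st' mm' =>
          induction mm' using Finsupp.induction_linear with
          | zero => simp
          | add f g hf hg => simp only [Finsupp.single_add, map_add, mul_add, hf, hg]
          | single xy' b =>
            have hc : ((st.2⁻¹ • xy.2 = st'.1⁻¹ • xy'.1) ∧ st.2 = st'.1) ↔
                (st.2 = st'.1 ∧ xy.2 = xy'.1) := by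
              constructor
              · rintro ⟨h1, h2⟩
                refine ⟨h2, ?_⟩
                rw [h2, inv_smul_eq_iff, smul_inv_smul] at h1
                exact h1
              · rintro ⟨h2, h1⟩
                exact ⟨by rw [h2, h1], h2⟩
            rw [hjP, apply_ite eAdd, map_zero, hs, hs, hs, hjQ]
            simp only [hc]
  refine ⟨{ eAdd with map_mul' := hmul }, hs, ?_, ?_⟩
  · -- equivariance
    intro g p
    obtain ⟨m, rfl⟩ : ∃ m, p = jP m := ⟨jP.symm p, (jP.apply_symm_apply p).symm⟩
    show eAdd (αP g (jP m)) = αQ g (eAdd (jP m))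
    induction m using Finsupp.induction_linear with
    | zero => simp
    | add f g' hf hg => simp only [map_add, hf, hg]
    | single st mm =>
      induction mm using Finsupp.induction_linear with
      | zero => simp
      | add f g' hf hg => simp only [Finsupp.single_add, map_add, hf, hg]
      | single xy a =>
        rw [hαP, hs, hs, hαQ]
        simp [mul_inv_rev, mul_smul]
  · -- naturality
    intro X' A' _ _ f hf α' φ hφ P' Q' _ _ jP' jQ' e' he' F hF Gm hGm p
    obtain ⟨m, rfl⟩ : ∃ m, p = jP m := ⟨jP.symm p, (jP.apply_symm_apply p).symm⟩
    show e' (F (jP m)) = Gm (eAdd (jP m))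
    induction m using Finsupp.induction_linear with
    | zero => simp
    | add f' g' hf' hg' => simp only [map_add, hf', hg']
    | single st mm =>
      induction mm using Finsupp.induction_linear with
      | zero => simp
      | add f' g' hf' hg' => simp only [Finsupp.single_add, map_add, hf', hg']
      | single xy a =>
        rw [hF, he', hs, hGm]
        have h1 : f (st.1⁻¹ • xy.1) = st.1⁻¹ • f xy.1 := hf _ _
        have h2 : f (st.2⁻¹ • xy.2) = st.2⁻¹ • f xy.2 := hf _ _
        rw [h1, h2]
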